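/- For a real-valued polynomial $p$ and the vector fields $L_z = \partial/\partial z + i(\partial p/\partial z)(z)\,\partial/\partial t$ acting on functions of $(z,w,t)$, one has $L_z(t + T(w,z)) = -i\sum_{j\ge 1}\frac{1}{j!}\frac{\partial^{j+1}p}{\partial z\,\partial\bar z^j}(z)\,\overline{(w-z)}^j$; in particular, $L_z(t+T(w,z))$ does not depend on $t$ and involves only derivatives of $\Delta p$. -/

import Mathlib

open Finset Complex

/-- The coefficient `A_{jk}(z) = (1/(j!k!)) ∂^{j+k}p/∂z^j∂z̄^k (z)` of the
polynomial `p(z) = ∑_{m,n ≤ d} a m n · z^m · z̄^n`. -/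
noncomputable def Acoef (d : ℕ) (a : ℕ → ℕ → ℂ) (j k : ℕ) (z : ℂ) : ℂ :=
  ∑ m ∈ Finset.range (d + 1), ∑ n ∈ Finset.range (d + 1),
    (m.choose j : ℂ) * (n.choose k : ℂ) * a m n * z ^ (m - j) * (starRingEnd ℂ z) ^ (n - k)

/-- The twist `T(w,z) = -2 Im (∑_{j≥1} (1/j!) ∂^j p/∂z^j (z) (w-z)^j)`. -/
noncomputable def Twist (d : ℕ) (a : ℕ → ℕ → ℂ) (w z : ℂ) : ℝ :=
  -2 * (∑ j ∈ Finset.Icc 1 d, Acoef d a j 0 z * (w - z) ^ j).im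

/-- `Λ(z,δ) = ∑_{j,k ≥ 1} |A_{jk}(z)| δ^{j+k}`. -/
noncomputable def Lam (d : ℕ) (a : ℕ → ℕ → ℂ) (z : ℂ) (δ : ℝ) : ℝ :=
  ∑ j ∈ Finset.Icc 1 d, ∑ k ∈ Finset.Icc 1 d,
    ‖Acoef d a j k z‖ * δ ^ (j + k)

/-- `μ(z,δ) = inf_{j,k ≥ 1, A_{jk}(z) ≠ 0} (|δ|/|A_{jk}(z)|)^{1/(j+k)}`. -/
noncomputable def muF (d : ℕ) (a : ℕ → ℕ → ℂ) (z : ℂ) (δ : ℝ) : ℝ :=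
  sInf {x : ℝ | ∃ j k : ℕ, 1 ≤ j ∧ 1 ≤ k ∧ Acoef d a j k z ≠ 0 ∧
    x = (|δ| / ‖Acoef d a j k z‖) ^ (1 / ((j : ℝ) + (k : ℝ)))}

/-- The Wirtinger derivative `∂f/∂z = (1/2)(∂f/∂x - i ∂f/∂y)`. -/
noncomputable def wDz (f : ℂ → ℂ) (z : ℂ) : ℂ :=
  (fderiv ℝ f z 1 - Complex.I * fderiv ℝ f z Complex.I) / 2

/-- The Wirtinger derivative `∂f/∂z̄ = (1/2)(∂f/∂x + i ∂f/∂y)`. -/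
noncomputable def wDzbar (f : ℂ → ℂ) (z : ℂ) : ℂ :=
  (fderiv ℝ f z 1 + Complex.I * fderiv ℝ f z Complex.I) / 2

/-- The nonisotropic pseudodistance `d_{NI}(z,w,t) = |z-w| + μ(z, t+T(w,z))`. -/
noncomputable def dNI (d : ℕ) (a : ℕ → ℕ → ℂ) (z w : ℂ) (t : ℝ) : ℝ :=
  ‖z - w‖ + muF d a z (t + Twist d a w z)

/-! Auxiliary lemmas: a Wirtinger calculus for functions `ℂ → ℂ`. -/

/-- The ℝ-linear map `v ↦ α v + β conj v`. -/
noncomputable def wmap (α β : ℂ) : ℂ →L[ℝ] ℂ :=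
  α • (ContinuousLinearMap.id ℝ ℂ) + β • (Complex.conjCLE.toContinuousLinearMap)

@[simp] lemma wmap_apply (α β v : ℂ) : wmap α β v = α * v + β * (starRingEnd ℂ) v := by
  simp [wmap, smul_eq_mul]

/-- `f` has Wirtinger derivatives `α = ∂f/∂z`, `β = ∂f/∂z̄` at `z`. -/
def HasW (f : ℂ → ℂ) (z α β : ℂ) : Prop := HasFDerivAt f (wmap α β) z

lemma hasW_id (z : ℂ) : HasW (fun ζ => ζ) z 1 0 := by
  have h := hasFDerivAt_id (𝕜 := ℝ) z
  have : (ContinuousLinearMap.id ℝ ℂ) = wmap 1 0 := by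
    ext v; simp
  rwa [this] at h

lemma hasW_const (z c : ℂ) : HasW (fun _ => c) z 0 0 := by
  have h := hasFDerivAt_const (𝕜 := ℝ) c z
  have : (0 : ℂ →L[ℝ] ℂ) = wmap 0 0 := by ext v; simp
  rwa [this] at h

lemma hasW_conj (z : ℂ) : HasW (fun ζ => (starRingEnd ℂ) ζ) z 0 1 := by
  have h := Complex.conjCLE.hasFDerivAt (x := z)
  have heq : (Complex.conjCLE.toContinuousLinearMap : ℂ →L[ℝ] ℂ) = wmap 0 1 := by
    ext v; simp
  have h2 : HasFDerivAt (fun ζ => (starRingEnd ℂ) ζ) Complex.conjCLE.toContinuousLinearMap z := h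
  rwa [heq] at h2

lemma HasW.add {f g : ℂ → ℂ} {z α β γ δ : ℂ} (hf : HasW f z α β) (hg : HasW g z γ δ) :
    HasW (fun ζ => f ζ + g ζ) z (α + γ) (β + δ) := by
  have h := HasFDerivAt.add hf hg
  have : wmap α β + wmap γ δ = wmap (α + γ) (β + δ) := by ext v; simp; ring
  rwa [this] at h

lemma HasW.mul {f g : ℂ → ℂ} {z α β γ δ : ℂ} (hf : HasW f z α β) (hg : HasW g z γ δ) :
    HasW (fun ζ => f ζ * g ζ) z (f z * γ + g z * α) (f z * δ + g z * β) := by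
  have h := HasFDerivAt.mul hf hg
  have : f z • wmap γ δ + g z • wmap α β
      = wmap (f z * γ + g z * α) (f z * δ + g z * β) := by
    ext v; simp [smul_eq_mul]; ring
  rwa [this] at h

lemma HasW.const_mul {f : ℂ → ℂ} {z α β : ℂ} (c : ℂ) (hf : HasW f z α β) :
    HasW (fun ζ => c * f ζ) z (c * α) (c * β) := by
  have := (hasW_const z c).mul hf
  simpa using this

lemma HasW.pow {f : ℂ → ℂ} {z α β : ℂ} (hf : HasW f z α β) (n : ℕ) :
    HasW (fun ζ => f ζ ^ n) z ((n : ℂ) * f z ^ (n - 1) * α) ((n : ℂ) * f z ^ (n - 1) * β) := by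
  induction n with
  | zero => simpa using hasW_const z 1
  | succ n ih =>
    have h := ih.mul hf
    have e : ∀ γ : ℂ, f z ^ n * γ + f z * ((n : ℂ) * f z ^ (n - 1) * γ)
        = ((n + 1 : ℕ) : ℂ) * f z ^ ((n + 1) - 1) * γ := by
      intro γ
      rcases Nat.eq_zero_or_pos n with h0 | h0
      · subst h0; push_cast; ring_nf
      · have hfz : f z * f z ^ (n - 1) = f z ^ n := by
          rw [← pow_succ']; congr 1; omega
        have h1 : (n + 1) - 1 = n := rfl
        rw [h1]
        push_cast
        rw [← hfz]; ring
    have h2 : HasW (fun ζ => f ζ ^ n * f ζ) z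
        (((n+1 : ℕ) : ℂ) * f z ^ ((n+1) - 1) * α) (((n+1 : ℕ) : ℂ) * f z ^ ((n+1) - 1) * β) := by
      rw [← e α, ← e β]; exact h
    have : (fun ζ => f ζ ^ n * f ζ) = fun ζ => f ζ ^ (n + 1) := by
      funext ζ; rw [pow_succ]
    rwa [this] at h2

lemma HasW.sum {ι : Type*} {s : Finset ι} {f : ι → ℂ → ℂ} {z : ℂ} {α β : ι → ℂ}
    (h : ∀ i ∈ s, HasW (f i) z (α i) (β i)) :
    HasW (fun ζ => ∑ i ∈ s, f i ζ) z (∑ i ∈ s, α i) (∑ i ∈ s, β i) := by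
  have h2 := HasFDerivAt.fun_sum h
  have : (∑ i ∈ s, wmap (α i) (β i)) = wmap (∑ i ∈ s, α i) (∑ i ∈ s, β i) := by
    ext v
    simp [ContinuousLinearMap.sum_apply, Finset.sum_mul, Finset.sum_add_distrib]
  rwa [this] at h2

lemma hasW_zpow (z : ℂ) (p : ℕ) : HasW (fun ζ => ζ ^ p) z ((p : ℂ) * z ^ (p - 1)) 0 := by
  simpa using (hasW_id z).pow p

lemma hasW_conjpow (z : ℂ) (q : ℕ) :
    HasW (fun ζ => ((starRingEnd ℂ) ζ) ^ q) z 0 ((q : ℂ) * ((starRingEnd ℂ) z) ^ (q - 1)) := by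
  simpa using (hasW_conj z).pow q

lemma hasW_wsub (w z : ℂ) : HasW (fun ζ => w - ζ) z (-1) 0 := by
  have h := (hasW_const z w).add ((hasW_id z).const_mul (-1))
  simp only [neg_one_mul, mul_one] at h
  have : (fun ζ => w + -ζ) = fun ζ => w - ζ := by funext ζ; ring
  rw [this] at h
  simpa using h

lemma HasW.congr_coef {f : ℂ → ℂ} {z α β α' β' : ℂ} (h : HasW f z α β)
    (ha : α = α') (hb : β = β') : HasW f z α' β' := ha ▸ hb ▸ h

lemma HasW.congr_fun {f g : ℂ → ℂ} {z α β : ℂ} (h : HasW f z α β)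
    (hfg : ∀ ζ, f ζ = g ζ) : HasW g z α β := (funext hfg : f = g) ▸ h

lemma HasW.conjc {f : ℂ → ℂ} {z α β : ℂ} (h : HasW f z α β) :
    HasW (fun ζ => (starRingEnd ℂ) (f ζ)) z ((starRingEnd ℂ) β) ((starRingEnd ℂ) α) := by
  have hc : HasFDerivAt (fun u : ℂ => (starRingEnd ℂ) u)
      Complex.conjCLE.toContinuousLinearMap (f z) := Complex.conjCLE.hasFDerivAt
  have h2 := hc.comp z h
  have heq : Complex.conjCLE.toContinuousLinearMap.comp (wmap α β)
      = wmap ((starRingEnd ℂ) β) ((starRingEnd ℂ) α) := by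
    ext v; simp; ring
  have h3 : HasFDerivAt (fun ζ => (starRingEnd ℂ) (f ζ))
      (Complex.conjCLE.toContinuousLinearMap.comp (wmap α β)) z := h2
  rwa [heq] at h3

lemma HasW.wDz_eq {f : ℂ → ℂ} {z α β : ℂ} (h : HasW f z α β) : wDz f z = α := by
  unfold wDz
  rw [HasFDerivAt.fderiv h]
  simp only [wmap_apply, map_one, mul_one, Complex.conj_I]
  linear_combination (- α / 2 + β / 2) * Complex.I_sq
/-! Lemmas about `Acoef`. -/

lemma conj_Acoef (d : ℕ) (a : ℕ → ℕ → ℂ) (hreal : ∀ m n, (starRingEnd ℂ) (a m n) = a n m)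
    (j k : ℕ) (z : ℂ) : (starRingEnd ℂ) (Acoef d a j k z) = Acoef d a k j z := by
  unfold Acoef
  rw [map_sum, Finset.sum_comm]
  refine Finset.sum_congr rfl fun m _ => ?_
  rw [map_sum]
  refine Finset.sum_congr rfl fun n _ => ?_
  simp only [map_mul, map_pow, Complex.conj_conj, Complex.conj_natCast, hreal]
  ring

lemma Acoef_top (d : ℕ) (a : ℕ → ℕ → ℂ) (k : ℕ) (z : ℂ) : Acoef d a (d+1) k z = 0 := by
  unfold Acoef
  refine Finset.sum_eq_zero fun m hm => Finset.sum_eq_zero fun n _ => ?_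
  rw [Nat.choose_eq_zero_of_lt (by simpa using Finset.mem_range.mp hm)]
  simp

lemma hasW_Acoef (d : ℕ) (a : ℕ → ℕ → ℂ) (j k : ℕ) (z : ℂ) :
    HasW (fun ζ => Acoef d a j k ζ) z
      (((j+1 : ℕ) : ℂ) * Acoef d a (j+1) k z) (((k+1 : ℕ) : ℂ) * Acoef d a j (k+1) z) := by
  unfold Acoef
  rw [Finset.mul_sum, Finset.mul_sum]
  refine HasW.sum fun m _ => ?_
  rw [Finset.mul_sum, Finset.mul_sum]
  refine HasW.sum fun n _ => ?_
  have h1 := ((hasW_zpow z (m - j)).mul (hasW_conjpow z (n - k))).const_mul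
      ((m.choose j : ℂ) * (n.choose k : ℂ) * a m n)
  have h2 := h1.congr_fun (g := fun ζ =>
      (m.choose j : ℂ) * (n.choose k : ℂ) * a m n * ζ ^ (m - j) * (starRingEnd ℂ) ζ ^ (n - k))
      (fun ζ => by ring)
  refine h2.congr_coef ?_ ?_
  · have hc : ((m.choose j : ℂ)) * ((m - j : ℕ) : ℂ) = ((j+1 : ℕ) : ℂ) * (m.choose (j+1) : ℂ) := by
      rw [← Nat.cast_mul, ← Nat.cast_mul, ← Nat.choose_succ_right_eq, mul_comm]
    have he : m - j - 1 = m - (j+1) := by omega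
    calc ((m.choose j : ℂ) * (n.choose k : ℂ) * a m n) *
          (z ^ (m-j) * 0 + ((starRingEnd ℂ) z) ^ (n-k) * (((m-j : ℕ) : ℂ) * z ^ (m-j-1)))
        = ((m.choose j : ℂ) * ((m-j : ℕ) : ℂ)) * (n.choose k : ℂ) * a m n
            * z ^ (m-j-1) * ((starRingEnd ℂ) z) ^ (n-k) := by ring
      _ = ((j+1 : ℕ) : ℂ) * ((m.choose (j+1) : ℂ) * (n.choose k : ℂ) * a m n
            * z ^ (m-(j+1)) * ((starRingEnd ℂ) z) ^ (n-k)) := by rw [hc, he]; ring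
  · have hc : ((n.choose k : ℂ)) * ((n - k : ℕ) : ℂ) = ((k+1 : ℕ) : ℂ) * (n.choose (k+1) : ℂ) := by
      rw [← Nat.cast_mul, ← Nat.cast_mul, ← Nat.choose_succ_right_eq, mul_comm]
    have he : n - k - 1 = n - (k+1) := by omega
    calc ((m.choose j : ℂ) * (n.choose k : ℂ) * a m n) *
          (z ^ (m-j) * (((n-k : ℕ) : ℂ) * ((starRingEnd ℂ) z) ^ (n-k-1))
            + ((starRingEnd ℂ) z) ^ (n-k) * 0)
        = ((n.choose k : ℂ) * ((n-k : ℕ) : ℂ)) * (m.choose j : ℂ) * a m n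
            * z ^ (m-j) * ((starRingEnd ℂ) z) ^ (n-k-1) := by ring
      _ = ((k+1 : ℕ) : ℂ) * ((m.choose j : ℂ) * (n.choose (k+1) : ℂ) * a m n
            * z ^ (m-j) * ((starRingEnd ℂ) z) ^ (n-(k+1))) := by rw [hc, he]; ring

theorem Lz_of_t_add_twist (d : ℕ) (a : ℕ → ℕ → ℂ)
    (hreal : ∀ m n, (starRingEnd ℂ) (a m n) = a n m) (z w : ℂ) (t : ℝ) :
    wDz (fun ζ => ((t + Twist d a w ζ : ℝ) : ℂ)) z
      + Complex.I * Acoef d a 1 0 z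
          * deriv (fun s : ℝ => ((s + Twist d a w z : ℝ) : ℂ)) t
      = -Complex.I * ∑ j ∈ Finset.Icc 1 d,
          Acoef d a 1 j z * (starRingEnd ℂ (w - z)) ^ j := by
  -- the inner sum `S`
  set S : ℂ → ℂ := fun ζ => ∑ j ∈ Finset.Icc 1 d, Acoef d a j 0 ζ * (w - ζ) ^ j with hS
  -- derivative of S
  have hWS : HasW S z
      (∑ j ∈ Finset.Icc 1 d, (Acoef d a j 0 z * ((j:ℂ) * (w-z)^(j-1) * (-1))
          + (w-z)^j * (((j+1:ℕ):ℂ) * Acoef d a (j+1) 0 z)))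
      (∑ j ∈ Finset.Icc 1 d, (Acoef d a j 0 z * ((j:ℂ) * (w-z)^(j-1) * 0)
          + (w-z)^j * (((0+1:ℕ):ℂ) * Acoef d a j 1 z))) := by
    refine HasW.sum fun j _ => ?_
    exact (hasW_Acoef d a j 0 z).mul ((hasW_wsub w z).pow j)
  -- telescoping: the ∂z coefficient equals -A₁₀
  have hα : (∑ j ∈ Finset.Icc 1 d, (Acoef d a j 0 z * ((j:ℂ) * (w-z)^(j-1) * (-1))
        + (w-z)^j * (((j+1:ℕ):ℂ) * Acoef d a (j+1) 0 z))) = - Acoef d a 1 0 z := by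
    set g : ℕ → ℂ := fun j => (j:ℂ) * Acoef d a j 0 z * (w-z)^(j-1) with hg
    have hterm : ∀ j : ℕ, (Acoef d a j 0 z * ((j:ℂ) * (w-z)^(j-1) * (-1))
        + (w-z)^j * (((j+1:ℕ):ℂ) * Acoef d a (j+1) 0 z)) = g (j+1) - g j := by
      intro j
      have h1 : (j + 1) - 1 = j := rfl
      simp only [hg, h1]
      push_cast
      ring
    rw [Finset.sum_congr rfl fun j _ => hterm j]
    rw [← Finset.Ico_add_one_right_eq_Icc, Finset.sum_Ico_eq_sum_range]
    have hre : ∀ i : ℕ, g (1 + i + 1) - g (1 + i) = (fun i => g (i+1)) (i+1) - (fun i => g (i+1)) i := by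
      intro i; simp only []; congr 2 <;> omega
    rw [Finset.sum_congr rfl fun i _ => hre i, Finset.sum_range_sub (fun i => g (i+1))]
    have h0 : d + 1 - 1 = d := rfl
    simp only [hg, h0, Acoef_top, Nat.add_sub_cancel]
    push_cast
    ring
  -- the ∂z̄ coefficient
  have hβ : (∑ j ∈ Finset.Icc 1 d, (Acoef d a j 0 z * ((j:ℂ) * (w-z)^(j-1) * 0)
        + (w-z)^j * (((0+1:ℕ):ℂ) * Acoef d a j 1 z)))
      = ∑ j ∈ Finset.Icc 1 d, Acoef d a j 1 z * (w-z)^j := by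
    refine Finset.sum_congr rfl fun j _ => ?_
    push_cast
    ring
  rw [hα] at hWS
  rw [hβ] at hWS
  -- the function equals t + I*S - I*conj S
  have hfun : ∀ ζ : ℂ, ((t + Twist d a w ζ : ℝ) : ℂ)
      = (t : ℂ) + Complex.I * S ζ + (-Complex.I) * ((starRingEnd ℂ) (S ζ)) := by
    intro ζ
    have hT : Twist d a w ζ = -2 * (S ζ).im := rfl
    rw [hT]
    apply Complex.ext <;>
      simp [Complex.add_re, Complex.add_im, Complex.mul_re, Complex.mul_im] <;> ring
  -- Wirtinger derivative of the full function
  have hWf : HasW (fun ζ => ((t + Twist d a w ζ : ℝ) : ℂ)) z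
      (0 + Complex.I * (- Acoef d a 1 0 z)
        + (-Complex.I) * ((starRingEnd ℂ) (∑ j ∈ Finset.Icc 1 d, Acoef d a j 1 z * (w-z)^j)))
      (0 + Complex.I * (∑ j ∈ Finset.Icc 1 d, Acoef d a j 1 z * (w-z)^j)
        + (-Complex.I) * ((starRingEnd ℂ) (- Acoef d a 1 0 z))) := by
    have h := ((hasW_const z (t:ℂ)).add (hWS.const_mul Complex.I)).add
      ((hWS.conjc).const_mul (-Complex.I))
    exact h.congr_fun fun ζ => (hfun ζ).symm
  rw [hWf.wDz_eq]
  -- the deriv term equals 1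
  have hderiv : deriv (fun s : ℝ => ((s + Twist d a w z : ℝ) : ℂ)) t = 1 := by
    have h : HasDerivAt (fun s : ℝ => ((s + Twist d a w z : ℝ) : ℂ)) ((1:ℝ):ℂ) t :=
      ((hasDerivAt_id t).add_const (Twist d a w z)).ofReal_comp
    simpa using h.deriv
  rw [hderiv]
  -- final algebra
  rw [map_sum]
  have hconj : ∀ j ∈ Finset.Icc 1 d, (starRingEnd ℂ) (Acoef d a j 1 z * (w-z)^j)
      = Acoef d a 1 j z * ((starRingEnd ℂ) (w-z))^j := by
    intro j _
    rw [map_mul, map_pow, conj_Acoef d a hreal]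
  rw [Finset.sum_congr rfl hconj, Finset.mul_sum]
  ring
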